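/- Let L/F be either an infinite extension or a finite separable extension, and let S be a finite-dimensional F-subspace of L. If A and B are two distinct k-atoms of S, then dim_F(A ∩ B) ≤ k − 1. -/

import Mathlib

open Module Submodule

variable {F L : Type*} [Field F] [Field L] [Algebra F L]

/-- The boundary `∂_S X = dim(XS) - dim(X)` (as an integer). -/
noncomputable def deltaS (S X : Submodule F L) : ℤ :=
  (finrank F ↥(X * S) : ℤ) - finrank F ↥X

/-- Membership in the family `𝒳_k`: `k ≤ dim X < ∞` and `dim(XS) + k ≤ dim L`. -/
def InXk (k : ℕ) (S X : Submodule F L) : Prop :=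
  FiniteDimensional F ↥X ∧ k ≤ finrank F ↥X ∧
    ((finrank F ↥(X * S) + k : ℕ) : Cardinal) ≤ Module.rank F L

/-- A `k`-fragment of `S`: an element of `𝒳_k` attaining the minimum `κ_k(S)` of `∂_S`. -/
def IsFragment (k : ℕ) (S X : Submodule F L) : Prop :=
  InXk k S X ∧ ∀ Y : Submodule F L, InXk k S Y → deltaS S X ≤ deltaS S Y

/-- A `k`-atom of `S`: a `k`-fragment of minimum dimension. -/
def IsAtomk (k : ℕ) (S A : Submodule F L) : Prop :=
  IsFragment k S A ∧ ∀ B : Submodule F L, IsFragment k S B → finrank F ↥A ≤ finrank F ↥B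

/-- Product of finite-dimensional subspaces is finite-dimensional. -/
lemma fd_mul (X Y : Submodule F L) [hX : FiniteDimensional F ↥X]
    [hY : FiniteDimensional F ↥Y] : FiniteDimensional F ↥(X * Y) :=
  Module.Finite.iff_fg.mpr ((Module.Finite.iff_fg.mp hX).mul (Module.Finite.iff_fg.mp hY))

/-- Orthogonal of `X*S` times `S` lands in the orthogonal of `X` (trace form). -/
lemma orth_mul_le (X S : Submodule F L) :
    ((Algebra.traceForm F L).orthogonal (X * S)) * S ≤ (Algebra.traceForm F L).orthogonal X := by
  rw [Submodule.mul_le]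
  intro y hy s hs
  intro x hx
  have hxs : x * s ∈ X * S := Submodule.mul_mem_mul hx hs
  have h2 := hy _ hxs
  show Algebra.traceForm F L x (y * s) = 0
  have h3 : Algebra.traceForm F L (x * s) y = 0 := h2
  rw [Algebra.traceForm_apply] at h3 ⊢
  rw [show x * (y * s) = x * s * y by ring]
  exact h3

theorem stmt6
    (hL : ¬ FiniteDimensional F L ∨ (FiniteDimensional F L ∧ Algebra.IsSeparable F L))
    (S : Submodule F L) (hS : FiniteDimensional F ↥S) (k : ℕ)
    (A B : Submodule F L) (hA : IsAtomk k S A) (hB : IsAtomk k S B) (hAB : A ≠ B) :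
    (finrank F ↥(A ⊓ B) : ℤ) ≤ (k : ℤ) - 1 := by
  by_contra hcon
  push_neg at hcon
  have hk : k ≤ finrank F ↥(A ⊓ B) := by
    have h' : (k : ℤ) ≤ finrank F ↥(A ⊓ B) := by linarith
    exact_mod_cast h'
  obtain ⟨⟨hAX, hAopt⟩, hAmin⟩ := hA
  obtain ⟨⟨hBX, hBopt⟩, hBmin⟩ := hB
  haveI hAfin : FiniteDimensional F ↥A := hAX.1
  haveI hBfin : FiniteDimensional F ↥B := hBX.1
  haveI : FiniteDimensional F ↥(A * S) := fd_mul A S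
  haveI : FiniteDimensional F ↥(B * S) := fd_mul B S
  haveI : FiniteDimensional F ↥(A ⊓ B) := Submodule.finiteDimensional_of_le inf_le_left
  haveI : FiniteDimensional F ↥(A ⊔ B) := Submodule.finiteDimensional_sup A B
  haveI : FiniteDimensional F ↥((A ⊓ B) * S) :=
    Submodule.finiteDimensional_of_le (mul_le_mul_left inf_le_left S)
  haveI : FiniteDimensional F ↥((A ⊔ B) * S) := fd_mul (A ⊔ B) S
  haveI : FiniteDimensional F ↥(A * S ⊔ B * S) := Submodule.finiteDimensional_sup _ _
  haveI : FiniteDimensional F ↥(A * S ⊓ B * S) := Submodule.finiteDimensional_of_le inf_le_left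
  -- both attain the same minimum and have the same dimension
  have hκ : deltaS S B = deltaS S A := le_antisymm (hBopt A hAX) (hAopt B hBX)
  have hdim : finrank F ↥A = finrank F ↥B :=
    le_antisymm (hAmin B ⟨hBX, hBopt⟩) (hBmin A ⟨hAX, hAopt⟩)
  -- A ⊓ B is in the family
  have hIle : (A ⊓ B) * S ≤ A * S := mul_le_mul_left inf_le_left S
  have hImem : InXk k S (A ⊓ B) := by
    refine ⟨inferInstance, hk, le_trans ?_ hAX.2.2⟩
    exact_mod_cast Nat.cast_le.mpr (add_le_add_left (Submodule.finrank_mono hIle) k)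
  have hIδ : deltaS S A ≤ deltaS S (A ⊓ B) := hAopt _ hImem
  -- the product (A ⊓ B) * S sits inside A*S ⊓ B*S
  have hIle2 : (A ⊓ B) * S ≤ A * S ⊓ B * S :=
    le_inf (mul_le_mul_left inf_le_left S) (mul_le_mul_left inf_le_right S)
  have hsupmul : (A ⊔ B) * S = A * S ⊔ B * S := Submodule.sup_mul A B S
  -- A ⊔ B is in the family
  have hsup : InXk k S (A ⊔ B) := by
    refine ⟨inferInstance, le_trans hAX.2.1 (Submodule.finrank_mono le_sup_left), ?_⟩
    rcases hL with hinf | ⟨hfd, hsep⟩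
    · have : Cardinal.aleph0 ≤ Module.rank F L := by
        by_contra h'
        exact hinf (IsNoetherian.iff_fg.mp (IsNoetherian.iff_rank_lt_aleph0.mpr (not_le.mp h')))
      exact le_trans (le_of_lt (Cardinal.nat_lt_aleph0 _)) this
    · -- finite separable case
      haveI := hfd
      set T := Algebra.traceForm F L with hT
      have hnd : T.Nondegenerate := traceForm_nondegenerate F L
      have hrefl : T.IsRefl := (Algebra.traceForm_isSymm F).isRefl
      have hrank : Module.rank F L = ((finrank F L : ℕ) : Cardinal) := (Module.finrank_eq_rank F L).symm
      rw [hrank, Nat.cast_le]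
      -- translate A's constraint
      have hASn : finrank F ↥(A * S) + k ≤ finrank F L := by
        have := hAX.2.2; rw [hrank, Nat.cast_le] at this; exact this
      -- the dual fragment Ad of A
      set Ad := T.orthogonal (A * S) with hAd
      have hAd_dim : finrank F ↥Ad + finrank F ↥(A * S) = finrank F L := by
        have h1 : finrank F ↥Ad = finrank F L - finrank F ↥(A * S) :=
          LinearMap.BilinForm.finrank_orthogonal hnd (A * S)
        have h2 : finrank F ↥(A * S) ≤ finrank F L := Submodule.finrank_le _
        omega
      have hAdS : Ad * S ≤ T.orthogonal A := orth_mul_le A S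
      have horthA : finrank F ↥(T.orthogonal A) + finrank F ↥A = finrank F L := by
        have h1 := LinearMap.BilinForm.finrank_orthogonal hnd A
        have h2 : finrank F ↥A ≤ finrank F L := Submodule.finrank_le _
        omega
      have hAdS_dim : finrank F ↥(Ad * S) + finrank F ↥A ≤ finrank F L := by
        have := Submodule.finrank_mono hAdS
        omega
      have hAdX : InXk k S Ad := by
        refine ⟨inferInstance, by omega, ?_⟩
        rw [hrank, Nat.cast_le]
        have := hAX.2.1
        omega
      have hAdδ : deltaS S Ad ≤ deltaS S A := by
        unfold deltaS
        have h1 := hAdS_dim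
        have h2 := hAd_dim
        have h3 := hAX.2.1
        omega
      have hAdfrag : IsFragment k S Ad := ⟨hAdX, fun Y hY => le_trans hAdδ (hAopt Y hY)⟩
      have hatom : finrank F ↥A ≤ finrank F ↥Ad := hAmin Ad hAdfrag
      -- the dimension count
      have hsi : finrank F ↥(A * S ⊔ B * S) + finrank F ↥(A * S ⊓ B * S)
          = finrank F ↥(A * S) + finrank F ↥(B * S) :=
        Submodule.finrank_sup_add_finrank_inf_eq (A * S) (B * S)
      have hm : finrank F ↥((A ⊓ B) * S) ≤ finrank F ↥(A * S ⊓ B * S) :=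
        Submodule.finrank_mono hIle2
      -- minimality: (A*S) - A ≤ ((A⊓B)*S) - (A⊓B) as integers
      have hδI : (finrank F ↥(A * S) : ℤ) - finrank F ↥A
          ≤ (finrank F ↥((A ⊓ B) * S) : ℤ) - finrank F ↥(A ⊓ B) := hIδ
      have hδB : (finrank F ↥(B * S) : ℤ) - finrank F ↥B
          = (finrank F ↥(A * S) : ℤ) - finrank F ↥A := by
        have := hκ; unfold deltaS at this; exact this
      rw [hsupmul]
      -- goal : finrank (A*S ⊔ B*S) + k ≤ finrank F L
      have hkI : (k : ℤ) ≤ finrank F ↥(A ⊓ B) := by exact_mod_cast hk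
      have hdim' : (finrank F ↥A : ℤ) = finrank F ↥B := by exact_mod_cast hdim
      have hADn : (finrank F ↥A : ℤ) + finrank F ↥(A * S) ≤ finrank F L := by
        have h1 : (finrank F ↥A : ℤ) ≤ finrank F ↥Ad := by exact_mod_cast hatom
        have h2 : (finrank F ↥Ad : ℤ) + finrank F ↥(A * S) = finrank F L := by exact_mod_cast hAd_dim
        linarith
      have goalZ : (finrank F ↥(A * S ⊔ B * S) : ℤ) + k ≤ finrank F L := by
        have hsi' : (finrank F ↥(A * S ⊔ B * S) : ℤ) + finrank F ↥(A * S ⊓ B * S)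
            = finrank F ↥(A * S) + finrank F ↥(B * S) := by exact_mod_cast hsi
        have hm' : (finrank F ↥((A ⊓ B) * S) : ℤ) ≤ finrank F ↥(A * S ⊓ B * S) := by
          exact_mod_cast hm
        linarith
      exact_mod_cast goalZ
  -- submodularity
  have hsupδ : deltaS S A ≤ deltaS S (A ⊔ B) := hAopt _ hsup
  have hsubmod : deltaS S (A ⊓ B) + deltaS S (A ⊔ B) ≤ deltaS S A + deltaS S B := by
    unfold deltaS
    have s1 : (finrank F ↥((A ⊓ B) * S) : ℤ) ≤ finrank F ↥(A * S ⊓ B * S) := by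
      exact_mod_cast Submodule.finrank_mono hIle2
    have s2 : (finrank F ↥((A ⊔ B) * S) : ℤ) = finrank F ↥(A * S ⊔ B * S) := by
      rw [hsupmul]
    have s3 : (finrank F ↥(A * S ⊔ B * S) : ℤ) + finrank F ↥(A * S ⊓ B * S)
        = finrank F ↥(A * S) + finrank F ↥(B * S) := by
      exact_mod_cast Submodule.finrank_sup_add_finrank_inf_eq (A * S) (B * S)
    have s4 : (finrank F ↥(A ⊔ B) : ℤ) + finrank F ↥(A ⊓ B)
        = finrank F ↥A + finrank F ↥B := by
      exact_mod_cast Submodule.finrank_sup_add_finrank_inf_eq A B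
    linarith
  -- hence A ⊓ B is a fragment
  have hIκ : deltaS S (A ⊓ B) ≤ deltaS S A := by
    have := hκ; linarith
  have hIfrag : IsFragment k S (A ⊓ B) := ⟨hImem, fun Y hY => le_trans hIκ (hAopt Y hY)⟩
  have h1 : finrank F ↥A ≤ finrank F ↥(A ⊓ B) := hAmin _ hIfrag
  have h2 : finrank F ↥B ≤ finrank F ↥(A ⊓ B) := hBmin _ hIfrag
  have e1 : A ⊓ B = A := Submodule.eq_of_le_of_finrank_le inf_le_left h1
  have e2 : A ⊓ B = B := Submodule.eq_of_le_of_finrank_le inf_le_right h2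
  exact hAB (e1 ▸ e2)
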